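/- Under the hypotheses of the numeric iteration lemma (y_{j+1} ≤ A^{ωⱼ/κⱼ}(yⱼ^{rⱼ}+yⱼ^{sⱼ})^{1/κⱼ}, ᾱ = Σωⱼ/κⱼ < ∞, Πβⱼ → β̄ > 0, Πγⱼ → γ̄ > 0), one has limsup_{j→∞} yⱼ ≤ (2A)^{G ᾱ} max{y₀^{γ̄}, y₀^{β̄}}, where G = limsup_{j→∞} Gⱼ with Gⱼ = max{1, γ_m⋯γ_n : 1 ≤ m ≤ n < j}. -/

import Mathlib

open Filter Finset Real

theorem stmt_12 (y κ r s ω : ℕ → ℝ) (A : ℝ)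
    (hy : ∀ j, 0 ≤ y j) (hκ : ∀ j, 0 < κ j) (hr : ∀ j, 0 < r j) (hrs : ∀ j, r j ≤ s j)
    (hω : ∀ j, 1 ≤ ω j) (hA : 1 ≤ A)
    (hiter : ∀ j, y (j + 1) ≤ A ^ (ω j / κ j) * (y j ^ r j + y j ^ s j) ^ (1 / κ j))
    (β γ : ℕ → ℝ) (hβ : ∀ j, β j = r j / κ j) (hγ : ∀ j, γ j = s j / κ j)
    (αbar : ℝ) (hαbar : HasSum (fun j => ω j / κ j) αbar)
    (βbar γbar : ℝ) (hβbar : 0 < βbar) (hγbar : 0 < γbar)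
    (hβprod : Filter.Tendsto (fun J => ∏ j ∈ Finset.range J, β j) Filter.atTop (nhds βbar))
    (hγprod : Filter.Tendsto (fun J => ∏ j ∈ Finset.range J, γ j) Filter.atTop (nhds γbar))
    (G : ℕ → ℝ)
    (hG : ∀ j, G j = sSup ({1} ∪ {x : ℝ | ∃ m n : ℕ, 1 ≤ m ∧ m ≤ n ∧ n < j ∧
      x = ∏ i ∈ Finset.Icc m n, γ i})) :
    Filter.limsup y Filter.atTop ≤
      (2 * A) ^ (Filter.limsup G Filter.atTop * αbar) * max (y 0 ^ γbar) (y 0 ^ βbar) := by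
  have h2A : (1:ℝ) ≤ 2 * A := by nlinarith
  have h2A0 : (0:ℝ) < 2 * A := lt_of_lt_of_le one_pos h2A
  have hcob : Filter.IsCoboundedUnder (· ≤ ·) Filter.atTop y :=
    Filter.isCoboundedUnder_le_of_le Filter.atTop hy
  set α : ℕ → ℝ := fun j => ω j / κ j with hα
  have hαpos : ∀ j, 0 ≤ α j := fun j =>
    div_nonneg (le_trans zero_le_one (hω j)) (hκ j).le
  have hαbar0 : 0 ≤ αbar := hαbar.nonneg hαpos
  have hβpos : ∀ j, 0 < β j := fun j => (hβ j) ▸ div_pos (hr j) (hκ j)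
  have hγpos : ∀ j, 0 < γ j := fun j => (hγ j) ▸ div_pos (lt_of_lt_of_le (hr j) (hrs j)) (hκ j)
  have hβγ : ∀ j, β j ≤ γ j := by
    intro j; rw [hβ j, hγ j]
    exact div_le_div_of_nonneg_right (hrs j) (hκ j).le
  -- one-step inequality
  have hkey : ∀ j t, (y j ^ t) ^ (1 / κ j) = y j ^ (t / κ j) := by
    intro j t
    rw [← Real.rpow_mul (hy j), mul_one_div]
  have step : ∀ j, y (j + 1) ≤ (2 * A) ^ α j * max (y j ^ β j) (y j ^ γ j) := by
    intro j
    have hmax0 : (0:ℝ) ≤ max (y j ^ r j) (y j ^ s j) :=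
      le_trans (Real.rpow_nonneg (hy j) _) (le_max_left _ _)
    have h1 : y j ^ r j + y j ^ s j ≤ 2 * max (y j ^ r j) (y j ^ s j) := by
      have a1 := le_max_left (y j ^ r j) (y j ^ s j)
      have a2 := le_max_right (y j ^ r j) (y j ^ s j)
      linarith
    have h2 : (y j ^ r j + y j ^ s j) ^ (1 / κ j)
        ≤ (2 * max (y j ^ r j) (y j ^ s j)) ^ (1 / κ j) := by
      apply Real.rpow_le_rpow _ h1 (one_div_nonneg.2 (hκ j).le)
      exact add_nonneg (Real.rpow_nonneg (hy j) _) (Real.rpow_nonneg (hy j) _)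
    have h3 : (2 * max (y j ^ r j) (y j ^ s j)) ^ (1 / κ j)
        = 2 ^ (1 / κ j) * (max (y j ^ r j) (y j ^ s j)) ^ (1 / κ j) :=
      Real.mul_rpow (by norm_num) hmax0
    have h4 : (max (y j ^ r j) (y j ^ s j)) ^ (1 / κ j) ≤ max (y j ^ β j) (y j ^ γ j) := by
      rcases le_total (y j ^ r j) (y j ^ s j) with h | h
      · rw [max_eq_right h, hkey, ← hγ]
        exact le_max_right _ _
      · rw [max_eq_left h, hkey, ← hβ]
        exact le_max_left _ _
    have h5 : (2:ℝ) ^ (1 / κ j) ≤ 2 ^ α j := by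
      apply Real.rpow_le_rpow_of_exponent_le (by norm_num)
      exact div_le_div_of_nonneg_right (hω j) (hκ j).le
    have h6 : (2 * A) ^ α j = 2 ^ α j * A ^ α j := Real.mul_rpow (by norm_num) (by linarith)
    calc y (j + 1) ≤ A ^ α j * (y j ^ r j + y j ^ s j) ^ (1 / κ j) := hiter j
      _ ≤ A ^ α j * (2 ^ (1 / κ j) * (max (y j ^ r j) (y j ^ s j)) ^ (1 / κ j)) := by
          rw [← h3]
          exact mul_le_mul_of_nonneg_left h2 (Real.rpow_nonneg (by linarith) _)
      _ ≤ A ^ α j * (2 ^ α j * max (y j ^ β j) (y j ^ γ j)) := by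
          apply mul_le_mul_of_nonneg_left _ (Real.rpow_nonneg (by linarith) _)
          apply mul_le_mul h5 h4 (Real.rpow_nonneg hmax0 _)
          positivity
      _ = (2 * A) ^ α j * max (y j ^ β j) (y j ^ γ j) := by rw [h6]; ring
  set B : ℕ → ℝ := fun J => ∏ j ∈ Finset.range J, β j with hB
  set C : ℕ → ℝ := fun J => ∏ j ∈ Finset.range J, γ j with hC
  have hBpos : ∀ J, 0 < B J := fun J => Finset.prod_pos fun i _ => hβpos i
  have hCpos : ∀ J, 0 < C J := fun J => Finset.prod_pos fun i _ => hγpos i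
  have hBC : ∀ J, B J ≤ C J := fun J =>
    Finset.prod_le_prod (fun i _ => (hβpos i).le) (fun i _ => hβγ i)
  -- uniform bounds on C
  obtain ⟨M, hM⟩ : ∃ M, ∀ J, C J ≤ M := by
    obtain ⟨M, hM⟩ := hγprod.isBoundedUnder_le.bddAbove_range
    exact ⟨M, fun J => hM (Set.mem_range_self J)⟩
  obtain ⟨ε, hε, hεC⟩ : ∃ ε > 0, ∀ J, ε ≤ C J := by
    obtain ⟨N, hN⟩ := Filter.eventually_atTop.1
      (hγprod.eventually (eventually_gt_nhds (half_lt_self hγbar)))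
    have hne : (Finset.range (N + 1)).Nonempty := Finset.nonempty_range_iff.2 (Nat.succ_ne_zero N)
    refine ⟨min (γbar / 2) ((Finset.range (N + 1)).inf' hne C), ?_, ?_⟩
    · apply lt_min (half_pos hγbar)
      exact (Finset.lt_inf'_iff hne).2 fun i _ => hCpos i
    · intro J
      rcases le_or_gt J N with h | h
      · exact le_trans (min_le_right _ _)
          (Finset.inf'_le C (Finset.mem_range.2 (Nat.lt_succ_of_le h)))
      · exact le_trans (min_le_left _ _) (hN J h.le).le
  have hM0 : 0 ≤ M := le_trans (hCpos 0).le (hM 0)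
  -- interval products are bounded
  have hIcc : ∀ m n : ℕ, m ≤ n → ∏ i ∈ Finset.Icc m n, γ i ≤ M / ε := by
    intro m n hmn
    have hsplit : C m * ∏ i ∈ Finset.Ico m (n + 1), γ i = C (n + 1) :=
      Finset.prod_range_mul_prod_Ico γ (by omega)
    have heq : ∏ i ∈ Finset.Icc m n, γ i = C (n + 1) / C m := by
      rw [← Finset.Ico_add_one_right_eq_Icc, eq_div_iff (hCpos m).ne', mul_comm]
      exact hsplit
    rw [heq]
    exact div_le_div₀ hM0 (hM _) hε (hεC m)
  have hsetbdd : ∀ j : ℕ, ∀ x ∈ ({1} ∪ {x : ℝ | ∃ m n : ℕ, 1 ≤ m ∧ m ≤ n ∧ n < j ∧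
      x = ∏ i ∈ Finset.Icc m n, γ i}), x ≤ max 1 (M / ε) := by
    rintro j x (rfl | ⟨m, n, _, hmn, _, rfl⟩)
    · exact le_max_left _ _
    · exact le_trans (hIcc m n hmn) (le_max_right _ _)
  have hG1 : ∀ j, 1 ≤ G j := by
    intro j
    rw [hG j]
    exact le_csSup ⟨max 1 (M / ε), hsetbdd j⟩ (Set.mem_union_left _ rfl)
  have hGmem : ∀ m n : ℕ, 1 ≤ m → m ≤ n → ∏ i ∈ Finset.Icc m n, γ i ≤ G (n + 1) := by
    intro m n h1 h2
    rw [hG (n + 1)]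
    exact le_csSup ⟨max 1 (M / ε), hsetbdd (n + 1)⟩
      (Set.mem_union_right _ ⟨m, n, h1, h2, Nat.lt_succ_self n, rfl⟩)
  have hGub : ∀ j, G j ≤ max 1 (M / ε) := by
    intro j
    rw [hG j]
    exact csSup_le ⟨1, Set.mem_union_left _ rfl⟩ fun x hx => hsetbdd j x hx
  have hGbdd : Filter.IsBoundedUnder (· ≤ ·) Filter.atTop G :=
    Filter.isBoundedUnder_of ⟨max 1 (M / ε), hGub⟩
  set K := Filter.limsup G Filter.atTop with hK
  have hGmono : Monotone G := by
    intro a b hab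
    rw [hG a, hG b]
    refine csSup_le ⟨1, Set.mem_union_left _ rfl⟩ ?_
    rintro x (rfl | ⟨m, n, h1, h2, h3, rfl⟩)
    · exact le_csSup ⟨max 1 (M / ε), hsetbdd b⟩ (Set.mem_union_left _ rfl)
    · exact le_csSup ⟨max 1 (M / ε), hsetbdd b⟩
        (Set.mem_union_right _ ⟨m, n, h1, h2, lt_of_lt_of_le h3 hab, rfl⟩)
  have hGleK : ∀ j, G j ≤ K :=
    fun j => Filter.le_limsup_of_frequently_le
      ((Filter.eventually_atTop.2 ⟨j, fun i hi => hGmono hi⟩).frequently) hGbdd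
  have hK1 : (1:ℝ) ≤ K := le_trans (hG1 0) (hGleK 0)
  have hKIcc : ∀ m n : ℕ, 1 ≤ m → m ≤ n → ∏ i ∈ Finset.Icc m n, γ i ≤ K :=
    fun m n h1 h2 => le_trans (hGmem m n h1 h2) (hGleK (n + 1))
  set D : ℕ → ℝ := fun J => ∑ j ∈ Finset.range J, α j * ∏ i ∈ Finset.Ico (j + 1) J, γ i with hD
  have hD0 : ∀ J, 0 ≤ D J := by
    intro J
    apply Finset.sum_nonneg
    intro i _
    exact mul_nonneg (hαpos i) (Finset.prod_nonneg fun k _ => (hγpos k).le)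
  have hDrec : ∀ J, D (J + 1) = α J + γ J * D J := by
    intro J
    simp only [hD]
    rw [Finset.sum_range_succ, Finset.Ico_self, Finset.prod_empty, mul_one, Finset.mul_sum]
    have h1 : ∀ j ∈ Finset.range J, α j * ∏ i ∈ Finset.Ico (j + 1) (J + 1), γ i
        = γ J * (α j * ∏ i ∈ Finset.Ico (j + 1) J, γ i) := by
      intro j hj
      rw [Finset.prod_Ico_succ_top (Nat.succ_le_of_lt (Finset.mem_range.1 hj))]
      ring
    rw [Finset.sum_congr rfl h1]
    ring
  have hDK : ∀ J, D J ≤ K * αbar := by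
    intro J
    have h1 : D J ≤ ∑ j ∈ Finset.range J, K * α j := by
      apply Finset.sum_le_sum
      intro j hj
      rw [mul_comm K (α j)]
      apply mul_le_mul_of_nonneg_left _ (hαpos j)
      rcases eq_or_lt_of_le (Nat.succ_le_of_lt (Finset.mem_range.1 hj)) with h | h
      · rw [← h, Finset.Ico_self, Finset.prod_empty]
        exact hK1
      · have hJ : J = (J - 1) + 1 := by omega
        have : Finset.Ico (j + 1) J = Finset.Icc (j + 1) (J - 1) := by
          rw [← Finset.Ico_add_one_right_eq_Icc, Nat.sub_add_cancel (by omega : 1 ≤ J)]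
        rw [this]
        exact hKIcc (j + 1) (J - 1) (Nat.succ_le_succ (Nat.zero_le j)) (by omega)
    rw [← Finset.mul_sum] at h1
    exact h1.trans (mul_le_mul_of_nonneg_left
      (sum_le_hasSum _ (fun i _ => hαpos i) hαbar) (le_trans zero_le_one hK1))
  rcases (hy 0).eq_or_lt with hy0 | hy0
  · -- y 0 = 0 : the sequence vanishes from index 1 on
    have hstep0 : ∀ j, y j = 0 → y (j + 1) = 0 := by
      intro j h0
      have h := hiter j
      rw [h0, Real.zero_rpow (hr j).ne', Real.zero_rpow (lt_of_lt_of_le (hr j) (hrs j)).ne',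
        add_zero, Real.zero_rpow (one_div_ne_zero (hκ j).ne'), mul_zero] at h
      exact le_antisymm h (hy (j + 1))
    have hz : ∀ j, y (j + 1) = 0 := by
      intro j
      induction j with
      | zero => exact hstep0 0 hy0.symm
      | succ n ih => exact hstep0 (n + 1) ih
    have hlim : Filter.limsup y Filter.atTop ≤ 0 := by
      apply Filter.limsup_le_of_le hcob
      refine Filter.eventually_atTop.2 ⟨1, fun j hj => ?_⟩
      obtain ⟨k, rfl⟩ := Nat.exists_eq_succ_of_ne_zero (by omega : j ≠ 0)
      exact (hz k).le
    refine hlim.trans ?_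
    rw [← hy0, Real.zero_rpow hγbar.ne', Real.zero_rpow hβbar.ne']
    simp
  · -- 0 < y 0 : main induction
    have main : ∀ J, y J ≤ (2 * A) ^ D J * max (y 0 ^ B J) (y 0 ^ C J) := by
      intro J
      induction J with
      | zero =>
        simp only [hD, hB, hC, Finset.range_zero, Finset.sum_empty, Finset.prod_empty,
          Real.rpow_zero, Real.rpow_one, one_mul, max_self, le_refl]
      | succ J ih =>
        have hmax0' : (0:ℝ) ≤ max (y 0 ^ B J) (y 0 ^ C J) :=
          le_trans (Real.rpow_nonneg hy0.le _) (le_max_left _ _)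
        have hMsucc : ∀ e, β J ≤ e → e ≤ γ J →
            (max (y 0 ^ B J) (y 0 ^ C J)) ^ e ≤ max (y 0 ^ B (J + 1)) (y 0 ^ C (J + 1)) := by
          intro e he1 he2
          have hBs : B (J + 1) = B J * β J := Finset.prod_range_succ β J
          have hCs : C (J + 1) = C J * γ J := Finset.prod_range_succ γ J
          rcases le_or_gt 1 (y 0) with h1 | h1
          · rw [max_eq_right (Real.rpow_le_rpow_of_exponent_le h1 (hBC J)),
              ← Real.rpow_mul (hy 0)]
            apply le_trans _ (le_max_right _ _)
            rw [hCs]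
            exact Real.rpow_le_rpow_of_exponent_le h1
              (mul_le_mul_of_nonneg_left he2 (hCpos J).le)
          · rw [max_eq_left (Real.rpow_le_rpow_of_exponent_ge hy0 h1.le (hBC J)),
              ← Real.rpow_mul (hy 0)]
            apply le_trans _ (le_max_left _ _)
            rw [hBs]
            exact Real.rpow_le_rpow_of_exponent_ge hy0 h1.le
              (mul_le_mul_of_nonneg_left he1 (hBpos J).le)
        have hbranch : ∀ e, β J ≤ e → e ≤ γ J →
            y J ^ e ≤ (2 * A) ^ (γ J * D J) * max (y 0 ^ B (J + 1)) (y 0 ^ C (J + 1)) := by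
          intro e he1 he2
          have he0 : 0 ≤ e := le_trans (hβpos J).le he1
          calc y J ^ e ≤ ((2 * A) ^ D J * max (y 0 ^ B J) (y 0 ^ C J)) ^ e :=
                Real.rpow_le_rpow (hy J) ih he0
            _ = ((2 * A) ^ D J) ^ e * (max (y 0 ^ B J) (y 0 ^ C J)) ^ e :=
                Real.mul_rpow (Real.rpow_nonneg h2A0.le _) hmax0'
            _ ≤ (2 * A) ^ (γ J * D J) * max (y 0 ^ B (J + 1)) (y 0 ^ C (J + 1)) := by
                apply mul_le_mul _ (hMsucc e he1 he2) (Real.rpow_nonneg hmax0' _)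
                  (Real.rpow_nonneg h2A0.le _)
                rw [← Real.rpow_mul h2A0.le]
                exact Real.rpow_le_rpow_of_exponent_le h2A (by nlinarith [hD0 J, he2])
        calc y (J + 1) ≤ (2 * A) ^ α J * max (y J ^ β J) (y J ^ γ J) := step J
          _ ≤ (2 * A) ^ α J *
              ((2 * A) ^ (γ J * D J) * max (y 0 ^ B (J + 1)) (y 0 ^ C (J + 1))) := by
              apply mul_le_mul_of_nonneg_left _ (Real.rpow_nonneg h2A0.le _)
              exact max_le (hbranch (β J) le_rfl (hβγ J)) (hbranch (γ J) (hβγ J) le_rfl)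
          _ = (2 * A) ^ D (J + 1) * max (y 0 ^ B (J + 1)) (y 0 ^ C (J + 1)) := by
              rw [hDrec J, Real.rpow_add h2A0, mul_assoc]
    have hfin : ∀ J, y J ≤ (2 * A) ^ (K * αbar) * max (y 0 ^ B J) (y 0 ^ C J) := by
      intro J
      refine (main J).trans (mul_le_mul_of_nonneg_right ?_ ?_)
      · exact Real.rpow_le_rpow_of_exponent_le h2A (hDK J)
      · exact le_trans (Real.rpow_nonneg hy0.le _) (le_max_left _ _)
    have htend : Filter.Tendsto (fun J => (2 * A) ^ (K * αbar) * max (y 0 ^ B J) (y 0 ^ C J))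
        Filter.atTop (nhds ((2 * A) ^ (K * αbar) * max (y 0 ^ βbar) (y 0 ^ γbar))) := by
      apply Filter.Tendsto.const_mul
      exact (Filter.Tendsto.rpow tendsto_const_nhds hβprod (Or.inl hy0.ne')).max
        (Filter.Tendsto.rpow tendsto_const_nhds hγprod (Or.inl hy0.ne'))
    calc Filter.limsup y Filter.atTop
        ≤ Filter.limsup (fun J => (2 * A) ^ (K * αbar) * max (y 0 ^ B J) (y 0 ^ C J))
            Filter.atTop :=
          Filter.limsup_le_limsup (Filter.Eventually.of_forall hfin) hcob
            htend.isBoundedUnder_le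
      _ = (2 * A) ^ (K * αbar) * max (y 0 ^ βbar) (y 0 ^ γbar) := htend.limsup_eq
      _ = (2 * A) ^ (K * αbar) * max (y 0 ^ γbar) (y 0 ^ βbar) := by rw [max_comm]
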